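/- For every integer k ≥ 1, the polynomial f(x) = d^{k+1}x^{2k+2} − d^{k+1}x^{2k+1} + dx − 1 has no real root in the interval (−∞, −1/√d). Consequently, Q_h has no eigenvalue strictly less than −2√d/(d+1). -/

import Mathlib

open Matrix

/-- Vertices of the complete `d`-ary tree of height `h`: words over `{0,…,d-1}`
of length at most `h` (encoded as a level `l ≤ h` together with a word of length `l`). -/
abbrev Vtx (d h : ℕ) : Type := Σ l : Fin (h + 1), Fin l.val → Fin d

/-- The word (from the root) corresponding to a vertex. -/
def toWord {d h : ℕ} (v : Vtx d h) : List (Fin d) := List.ofFn v.2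

/-- The level of a vertex, i.e. its distance from the root. -/
def lvl {d h : ℕ} (v : Vtx d h) : ℕ := v.1.val

/-- Adjacency in the tree: one vertex is obtained from the other by appending one letter. -/
def adj {d h : ℕ} (v w : Vtx d h) : Prop :=
  (∃ a : Fin d, toWord w = toWord v ++ [a]) ∨ ∃ a : Fin d, toWord v = toWord w ++ [a]

-- The transition matrix of the simple random walk on the complete `d`-ary tree of
-- height `h`: probability `1/(d+1)` along each edge, holding probability `1/(d+1)` at the
-- root and `d/(d+1)` at each leaf.
open scoped Classical in
noncomputable def Q (d h : ℕ) : Matrix (Vtx d h) (Vtx d h) ℂ := fun v w =>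
  if adj v w then 1 / (d + 1)
  else if v = w ∧ lvl v = 0 then 1 / (d + 1)
  else if v = w ∧ lvl v = h then (d : ℂ) / (d + 1)
  else 0

/-- `inSub v c w` means that `w` belongs to the complete subtree `T_c^v` rooted at the
child of `v` labelled `c`. -/
def inSub {d h : ℕ} (v : Vtx d h) (c : Fin d) (w : Vtx d h) : Prop :=
  (toWord v ++ [c]) <+: toWord w

lemma toWord_length {d h : ℕ} (v : Vtx d h) : (toWord v).length = lvl v := by
  simp [toWord, lvl]

lemma toWord_inj {d h : ℕ} {v w : Vtx d h} (hvw : toWord v = toWord w) : v = w := by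
  obtain ⟨⟨l, hl⟩, f⟩ := v
  obtain ⟨⟨m, hm⟩, g⟩ := w
  have hlen : l = m := by
    have := congrArg List.length hvw
    simpa [toWord] using this
  subst hlen
  have : f = g := List.ofFn_injective hvw
  subst this
  rfl

lemma cancel_aux (a b q u : ℂ) (ha : a ≠ 0) :
    a / b * q * (a⁻¹ * u) = b⁻¹ * (q * u) := by
  have : a / b * q * (a⁻¹ * u) = (a * a⁻¹) * (b⁻¹ * (q * u)) := by
    rw [div_eq_mul_inv]; ring
  rw [this, mul_inv_cancel₀ ha, one_mul]

lemma not_adj_self {d h : ℕ} (v : Vtx d h) : ¬ adj v v := by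
  rintro (⟨a, ha⟩ | ⟨a, ha⟩) <;>
  · have := congrArg List.length ha
    simp at this

/-- For every k ≥ 1 the polynomial d^{k+1}x^{2k+2} − d^{k+1}x^{2k+1} + dx − 1 has no
real root in (−∞, −1/√d); consequently Q_h has no (real) eigenvalue strictly less than
−2√d/(d+1). -/
theorem stmt_16 (d h : ℕ) (hd : 2 ≤ d) (hh : 1 ≤ h) :
    (∀ k : ℕ, 1 ≤ k → ∀ x : ℝ, x < -(1 / Real.sqrt d) →
      (d : ℝ) ^ (k + 1) * x ^ (2 * k + 2) - (d : ℝ) ^ (k + 1) * x ^ (2 * k + 1)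
        + d * x - 1 ≠ 0) ∧
    (∀ r : ℝ, Module.End.HasEigenvalue (Matrix.toLin' (Q d h)) ((r : ℂ)) →
      ¬ r < -(2 * Real.sqrt d / ((d : ℝ) + 1))) := by
  classical
  have hd0 : (0:ℝ) < d := by
    have : (2:ℝ) ≤ d := by exact_mod_cast hd
    linarith
  have hsd : 0 < Real.sqrt d := Real.sqrt_pos.mpr hd0
  have hsq : Real.sqrt d * Real.sqrt d = d := Real.mul_self_sqrt hd0.le
  constructor
  · -- polynomial part
    intro k hk x hx
    set y : ℝ := -x with hy
    have hxy : x = -y := by rw [hy]; ring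
    have hy1 : 1 / Real.sqrt d < y := by
      rw [hy]; linarith
    have hy0 : 0 < y := lt_trans (by positivity) hy1
    have hu : 1 < (d:ℝ) * y ^ 2 := by
      have h1 : 1 < y * Real.sqrt d := by
        rw [div_lt_iff₀ hsd] at hy1; linarith
      nlinarith
    have e1 : x ^ (2*k+2) = (y^2)^(k+1) := by
      rw [hxy, Even.neg_pow ⟨k+1, by ring⟩, ← pow_mul]
      ring_nf
    have e2 : x ^ (2*k+1) = -((y^2)^k * y) := by
      rw [hxy, Odd.neg_pow ⟨k, by ring⟩, ← pow_mul]
      ring_nf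
    have h1 : 1 < ((d:ℝ) * y^2) ^ (k+1) := one_lt_pow₀ hu (Nat.succ_ne_zero k)
    have h2 : 1 ≤ ((d:ℝ) * y^2) ^ k := one_le_pow₀ hu.le
    have e3 : ((d:ℝ) * y^2) ^ (k+1) = (d:ℝ)^(k+1) * (y^2)^(k+1) := mul_pow _ _ _
    have e4 : ((d:ℝ) * y^2) ^ k = (d:ℝ)^k * (y^2)^k := mul_pow _ _ _
    have e5 : (d:ℝ)^(k+1) = (d:ℝ)^k * d := pow_succ _ _
    have e6 : (d:ℝ)^(k+1) * ((y^2)^k * y) = ((d:ℝ)*y) * (((d:ℝ) * y^2) ^ k) := by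
      rw [e4, e5]; ring
    have hpos : 0 < (d : ℝ) ^ (k + 1) * x ^ (2 * k + 2) - (d : ℝ) ^ (k + 1) * x ^ (2 * k + 1)
        + d * x - 1 := by
      rw [e1, e2, hxy]
      have hdy : 0 < (d:ℝ) * y := mul_pos hd0 hy0
      nlinarith [mul_nonneg hdy.le (by linarith : (0:ℝ) ≤ ((d:ℝ) * y^2) ^ k - 1), e6, e3, h1]
    exact hpos.ne'
  · -- eigenvalue part
    intro r hr
    set c : ℝ := (Real.sqrt d)⁻¹ with hcdef
    have hc0 : 0 < c := by positivity
    set M : Matrix (Vtx d h) (Vtx d h) ℂ :=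
      fun v w => ((c ^ lvl w / c ^ lvl v : ℝ) : ℂ) * Q d h v w with hMdef
    have hμ : Module.End.HasEigenvalue (Matrix.toLin' M) ((r:ℂ)) := by
      obtain ⟨z, hz⟩ := hr.exists_hasEigenvector
      have hz0 : z ≠ 0 := hz.2
      have hzeq : (Q d h).mulVec z = (r:ℂ) • z := by
        have := hz.apply_eq_smul
        rwa [Matrix.toLin'_apply] at this
      set z' : Vtx d h → ℂ := fun v => ((c ^ lvl v : ℝ) : ℂ)⁻¹ * z v with hz'def
      have hcv : ∀ v : Vtx d h, ((c ^ lvl v : ℝ) : ℂ) ≠ 0 := by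
        intro v
        simp only [ne_eq, Complex.ofReal_eq_zero]
        positivity
      have hz'0 : z' ≠ 0 := by
        intro hcontra
        apply hz0
        funext v
        have := congrFun hcontra v
        simp only [hz'def, Pi.zero_apply, mul_eq_zero, inv_eq_zero] at this
        rcases this with hh' | hh'
        · exact absurd hh' (hcv v)
        · exact hh'
      have hMz : M.mulVec z' = (r:ℂ) • z' := by
        funext v
        have hQv := congrFun hzeq v
        simp only [Matrix.mulVec, dotProduct] at hQv ⊢
        have : ∀ w : Vtx d h,
            M v w * z' w = ((c ^ lvl v : ℝ) : ℂ)⁻¹ * (Q d h v w * z w) := by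
          intro w
          have e : M v w * z' w = ((c ^ lvl w : ℝ) : ℂ) / ((c ^ lvl v : ℝ) : ℂ)
              * Q d h v w * (((c ^ lvl w : ℝ) : ℂ)⁻¹ * z w) := by
            simp only [hMdef, hz'def]
            rw [Complex.ofReal_div]
          rw [e, cancel_aux _ _ _ _ (hcv w)]
        rw [Finset.sum_congr rfl (fun w _ => this w), ← Finset.mul_sum, hQv]
        simp only [Pi.smul_apply, smul_eq_mul, hz'def]
        ring
      exact Module.End.hasEigenvalue_of_hasEigenvector
        ⟨Module.End.mem_eigenspace_iff.mpr (by rw [Matrix.toLin'_apply, hMz]), hz'0⟩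
    obtain ⟨k, hk⟩ := eigenvalue_mem_ball hμ
    rw [Metric.mem_closedBall, dist_eq_norm] at hk
    -- diagonal: M k k = Q k k is a nonnegative real
    have hQunfold : ∀ v w : Vtx d h, Q d h v w = if adj v w then 1 / ((d:ℂ) + 1)
        else if v = w ∧ lvl v = 0 then 1 / ((d:ℂ) + 1)
        else if v = w ∧ lvl v = h then (d : ℂ) / ((d:ℂ) + 1)
        else 0 := fun v w => rfl
    have hMkk : ∃ t : ℝ, 0 ≤ t ∧ M k k = (t : ℂ) := by
      have hdiag : (c ^ lvl k / c ^ lvl k : ℝ) = 1 := by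
        field_simp
      have hM1 : M k k = Q d h k k := by
        simp only [hMdef, hdiag, Complex.ofReal_one, one_mul]
      rw [hM1, hQunfold, if_neg (not_adj_self k)]
      by_cases h0 : lvl k = 0
      · exact ⟨1/(d+1), by positivity, by rw [if_pos ⟨rfl, h0⟩]; push_cast; ring⟩
      · rw [if_neg (by tauto)]
        by_cases hl : lvl k = h
        · exact ⟨d/(d+1), by positivity, by rw [if_pos ⟨rfl, hl⟩]; push_cast; ring⟩
        · exact ⟨0, le_refl _, by rw [if_neg (by tauto)]; exact Complex.ofReal_zero.symm⟩
    -- row sum bound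
    have hrow : ∑ j ∈ Finset.univ.erase k, ‖M k j‖ ≤ 2 * Real.sqrt d / ((d:ℝ) + 1) := by
      have hQnorm : ∀ j, adj k j → ‖Q d h k j‖ = 1 / ((d:ℝ)+1) := by
        intro j hadj
        have : Q d h k j = ((1 / ((d:ℝ)+1) : ℝ) : ℂ) := by
          rw [hQunfold, if_pos hadj]; push_cast; ring
        rw [this, Complex.norm_real, Real.norm_eq_abs, abs_of_pos (by positivity)]
      have hMnorm : ∀ j, ‖M k j‖ = (c ^ lvl j / c ^ lvl k) * ‖Q d h k j‖ := by
        intro j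
        simp only [hMdef, norm_mul, Complex.norm_real, Real.norm_eq_abs]
        rw [abs_of_pos (by positivity)]
      set NB := (Finset.univ.erase k).filter (fun j => adj k j) with hNB
      have hstep1 : ∑ j ∈ Finset.univ.erase k, ‖M k j‖ = ∑ j ∈ NB, ‖M k j‖ := by
        rw [hNB]
        refine (Finset.sum_filter_of_ne ?_).symm
        intro j hj hne
        by_contra hnadj
        apply hne
        rw [hMnorm j]
        have hjk : j ≠ k := (Finset.mem_erase.mp hj).1
        have : Q d h k j = 0 := by
          rw [hQunfold, if_neg hnadj,
            if_neg (by rintro ⟨hkj, -⟩; exact hjk hkj.symm),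
            if_neg (by rintro ⟨hkj, -⟩; exact hjk hkj.symm)]
        rw [this]; simp
      rw [hstep1]
      set P : Vtx d h → Prop := fun j => ∃ a : Fin d, toWord j = toWord k ++ [a] with hP
      rw [← Finset.sum_filter_add_sum_filter_not NB P]
      have hchild : ∑ j ∈ NB.filter P, ‖M k j‖ ≤ Real.sqrt d / ((d:ℝ)+1) := by
        have hterm : ∀ j ∈ NB.filter P, ‖M k j‖ = c * (1 / ((d:ℝ)+1)) := by
          intro j hj
          rw [Finset.mem_filter] at hj
          obtain ⟨hjNB, a, ha⟩ := hj
          have hadj : adj k j := (Finset.mem_filter.mp hjNB).2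
          have hlvl : lvl j = lvl k + 1 := by
            have := congrArg List.length ha
            simpa [toWord_length] using this
          rw [hMnorm j, hQnorm j hadj, hlvl, pow_succ]
          field_simp
        rw [Finset.sum_congr rfl hterm, Finset.sum_const, nsmul_eq_mul]
        have hcard : (NB.filter P).card ≤ d := by
          have : (NB.filter P).card ≤ (Finset.univ : Finset (Fin d)).card := by
            apply Finset.card_le_card_of_injOn
              (fun j => ((toWord j).getLast?).getD ⟨0, by omega⟩)
            · intro j _; exact Finset.mem_univ _
            · intro j1 hj1 j2 hj2 heq
              simp only [Finset.coe_filter, Set.mem_setOf_eq] at hj1 hj2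
              obtain ⟨-, a1, ha1⟩ := hj1
              obtain ⟨-, a2, ha2⟩ := hj2
              have heq' : a1 = a2 := by
                have h1 : ((toWord j1).getLast?).getD (⟨0, by omega⟩ : Fin d)
                    = ((toWord j2).getLast?).getD (⟨0, by omega⟩ : Fin d) := heq
                rw [ha1, ha2, List.getLast?_concat, List.getLast?_concat] at h1
                simpa using h1
              exact toWord_inj (by rw [ha1, ha2, heq'])
          simpa using this
        have : ((NB.filter P).card : ℝ) * (c * (1 / ((d:ℝ)+1)))
            ≤ (d:ℝ) * (c * (1 / ((d:ℝ)+1))) := by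
          apply mul_le_mul_of_nonneg_right _ (by positivity)
          exact_mod_cast hcard
        refine le_trans this (le_of_eq ?_)
        have hdc : (d:ℝ) * (Real.sqrt d)⁻¹ = Real.sqrt d := by
          rw [eq_comm, eq_mul_inv_iff_mul_eq₀ hsd.ne', hsq]
        rw [hcdef]
        calc (d:ℝ) * ((Real.sqrt d)⁻¹ * (1 / ((d:ℝ)+1)))
            = ((d:ℝ) * (Real.sqrt d)⁻¹) * (1 / ((d:ℝ)+1)) := by ring
          _ = Real.sqrt d / ((d:ℝ)+1) := by rw [hdc]; ring
      have hparent : ∑ j ∈ NB.filter (fun j => ¬ P j), ‖M k j‖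
          ≤ Real.sqrt d / ((d:ℝ)+1) := by
        have hterm : ∀ j ∈ NB.filter (fun j => ¬ P j),
            ‖M k j‖ = Real.sqrt d * (1 / ((d:ℝ)+1)) := by
          intro j hj
          rw [Finset.mem_filter] at hj
          obtain ⟨hjNB, hnP⟩ := hj
          have hadj : adj k j := (Finset.mem_filter.mp hjNB).2
          obtain ⟨a, ha⟩ : ∃ a : Fin d, toWord k = toWord j ++ [a] := by
            rcases hadj with hca | hpa
            · exact absurd hca hnP
            · exact hpa
          have hlvl : lvl k = lvl j + 1 := by
            have := congrArg List.length ha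
            simpa [toWord_length] using this
          rw [hMnorm j, hQnorm j hadj, hlvl, pow_succ, hcdef]
          rw [div_mul_eq_mul_div, mul_comm]
          congr 1
          field_simp
        rw [Finset.sum_congr rfl hterm, Finset.sum_const, nsmul_eq_mul]
        have hcard : (NB.filter (fun j => ¬ P j)).card ≤ 1 := by
          rw [Finset.card_le_one]
          intro j1 hj1 j2 hj2
          rw [Finset.mem_filter] at hj1 hj2
          obtain ⟨hjNB1, hnP1⟩ := hj1
          obtain ⟨hjNB2, hnP2⟩ := hj2
          obtain ⟨a1, ha1⟩ : ∃ a : Fin d, toWord k = toWord j1 ++ [a] := by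
            rcases (Finset.mem_filter.mp hjNB1).2 with hca | hpa
            · exact absurd hca hnP1
            · exact hpa
          obtain ⟨a2, ha2⟩ : ∃ a : Fin d, toWord k = toWord j2 ++ [a] := by
            rcases (Finset.mem_filter.mp hjNB2).2 with hca | hpa
            · exact absurd hca hnP2
            · exact hpa
          have hlen : (toWord j1).length = (toWord j2).length := by
            have := congrArg List.length (ha1.symm.trans ha2)
            simpa using this
          have := List.append_inj' (ha1.symm.trans ha2) (by simp)
          exact toWord_inj this.1
        have : ((NB.filter (fun j => ¬ P j)).card : ℝ)
            * (Real.sqrt d * (1 / ((d:ℝ)+1)))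
            ≤ 1 * (Real.sqrt d * (1 / ((d:ℝ)+1))) := by
          apply mul_le_mul_of_nonneg_right _ (by positivity)
          exact_mod_cast hcard
        refine le_trans this (le_of_eq ?_)
        ring
      linarith [hchild, hparent,
        (by ring : Real.sqrt d / ((d:ℝ)+1) + Real.sqrt d / ((d:ℝ)+1)
          = 2 * Real.sqrt d / ((d:ℝ)+1))]
    obtain ⟨t, ht0, hMt⟩ := hMkk
    rw [hMt] at hk
    have habs : |r - t| ≤ 2 * Real.sqrt d / ((d:ℝ)+1) := by
      have : ‖((r:ℂ) - (t:ℂ))‖ = |r - t| := by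
        rw [← Complex.ofReal_sub, Complex.norm_real, Real.norm_eq_abs]
      rw [this] at hk
      linarith [hrow]
    intro hcon
    have := abs_le.mp habs
    linarith [this.1]
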